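/- Let k > 0, θ > 0, ρ ≥ 0, λ_I ≥ 0 and λ_O ≥ 0 be reals, and let H be a real random variable whose law has density f(x) = x^(k−1) · exp(−x/θ) / (Γ(k) θ^k) on (0, ∞). Then the ergodic capacity of the outdoor user satisfies E[log₂(1 + ρ·λ_O·H²/(ρ·λ_I·H² + 1))] ≤ log₂(1 + ρ·λ_O·M/(ρ·λ_I·M + 1)), where M = θ²·k·(k + 1). -/

import Mathlib

open Real MeasureTheory ProbabilityTheory

lemma key_log (a b M x : ℝ) (ha : 0 ≤ a) (hb : 0 ≤ b) (hM : 0 ≤ M) (hx : 0 ≤ x) :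
    Real.log (1 + a*x/(b*x+1)) ≤ Real.log (1 + a*M/(b*M+1))
      + a/(((a+b)*M+1)*(b*M+1)) * (x-M) := by
  have hu2 : (0:ℝ) < b*x+1 := by positivity
  have hv2 : (0:ℝ) < b*M+1 := by positivity
  have hv1 : (0:ℝ) < (a+b)*M+1 := by positivity
  have hP : (0:ℝ) < 1 + a*x/(b*x+1) := by positivity
  have hQ : (0:ℝ) < 1 + a*M/(b*M+1) := by positivity
  have h1 : Real.log (1 + a*x/(b*x+1)) - Real.log (1 + a*M/(b*M+1))
      ≤ (1 + a*x/(b*x+1))/(1 + a*M/(b*M+1)) - 1 := by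
    rw [← Real.log_div hP.ne' hQ.ne']
    exact Real.log_le_sub_one_of_pos (div_pos hP hQ)
  have e1 : (1 + a*x/(b*x+1))/(1 + a*M/(b*M+1)) - 1
      = a*(x-M)/((b*x+1)*((a+b)*M+1)) := by
    field_simp
    ring
  have e2 : a/(((a+b)*M+1)*(b*M+1))*(x-M) - a*(x-M)/((b*x+1)*((a+b)*M+1))
      = a*b*(x-M)^2/(((a+b)*M+1)*(b*M+1)*(b*x+1)) := by
    field_simp
    ring
  have h3 : (0:ℝ) ≤ a*b*(x-M)^2/(((a+b)*M+1)*(b*M+1)*(b*x+1)) := by positivity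
  linarith

lemma key_logb (a b M x : ℝ) (ha : 0 ≤ a) (hb : 0 ≤ b) (hM : 0 ≤ M) (hx : 0 ≤ x) :
    Real.logb 2 (1 + a*x/(b*x+1)) ≤ Real.logb 2 (1 + a*M/(b*M+1))
      + a/(((a+b)*M+1)*(b*M+1)*Real.log 2) * (x-M) := by
  have hl2 : (0:ℝ) < Real.log 2 := Real.log_pos one_lt_two
  have h := key_log a b M x ha hb hM hx
  have e : a/(((a+b)*M+1)*(b*M+1)*Real.log 2) * (x-M)
      = (a/(((a+b)*M+1)*(b*M+1)) * (x-M))/Real.log 2 := by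
    field_simp
  rw [Real.logb, Real.logb, e, ← add_div]
  gcongr

lemma density_mul_sq (k θ : ℝ) (hk : 0 < k) (hθ : 0 < θ) (x : ℝ) :
    ENNReal.ofReal (if 0 < x then x ^ (k - 1) * Real.exp (-x / θ) / (Real.Gamma k * θ ^ k)
        else 0) * ENNReal.ofReal (x ^ 2)
      = ENNReal.ofReal (θ ^ 2 * (k * (k + 1))) * gammaPDF (k + 2) (1/θ) x := by
  rcases lt_trichotomy x 0 with hx | hx | hx
  · rw [if_neg (by linarith), gammaPDF_of_neg hx]
    simp
  · subst hx
    rw [if_neg (lt_irrefl 0), gammaPDF_of_nonneg le_rfl]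
    have : (0:ℝ) ^ (k + 2 - 1) = 0 := by
      rw [Real.zero_rpow (by linarith)]
    simp [this]
  · rw [if_pos hx, gammaPDF_of_nonneg hx.le, ← ENNReal.ofReal_mul (by positivity),
      ← ENNReal.ofReal_mul (by positivity)]
    congr 1
    have hG : Real.Gamma (k + 2) = (k + 1) * (k * Real.Gamma k) := by
      have h1 : Real.Gamma (k + 2) = (k + 1) * Real.Gamma (k + 1) := by
        have := Real.Gamma_add_one (s := k + 1) (by positivity)
        rw [show k + 1 + 1 = k + 2 by ring] at this
        exact this
      rw [h1, Real.Gamma_add_one hk.ne']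
    have hθk : (0:ℝ) < θ ^ k := Real.rpow_pos_of_pos hθ k
    have hθ2 : ((1:ℝ)/θ) ^ (k + 2) = 1 / (θ ^ k * θ ^ 2) := by
      rw [Real.div_rpow zero_le_one hθ.le, Real.one_rpow, ← Real.rpow_natCast θ 2,
        ← Real.rpow_add hθ]
      norm_num
    have hx2 : x ^ (k - 1) * x ^ 2 = x ^ (k + 2 - 1) := by
      rw [← Real.rpow_natCast x 2, ← Real.rpow_add hx]
      norm_num
      ring_nf
    have hexp : Real.exp (-x / θ) = Real.exp (-(1/θ * x)) := by ring_nf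
    have hGpos : (0:ℝ) < Real.Gamma k := Real.Gamma_pos_of_pos hk
    rw [hG, hθ2, hexp, ← hx2]
    field_simp

lemma lint_sq (k θ : ℝ) (hk : 0 < k) (hθ : 0 < θ)
    {Ω : Type*} [MeasurableSpace Ω] (P : Measure Ω)
    (H : Ω → ℝ) (hH : Measurable H)
    (hlaw : P.map H = volume.withDensity (fun x =>
      ENNReal.ofReal (if 0 < x then x ^ (k - 1) * Real.exp (-x / θ) / (Real.Gamma k * θ ^ k)
        else 0))) :
    ∫⁻ ω, ENNReal.ofReal ((H ω) ^ 2) ∂P = ENNReal.ofReal (θ ^ 2 * (k * (k + 1))) := by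
  have hfmeas : Measurable (fun x : ℝ =>
      ENNReal.ofReal (if 0 < x then x ^ (k - 1) * Real.exp (-x / θ) / (Real.Gamma k * θ ^ k)
        else 0)) := by
    apply Measurable.ennreal_ofReal
    apply Measurable.ite measurableSet_Ioi _ measurable_const
    fun_prop
  have h1 : ∫⁻ ω, ENNReal.ofReal ((H ω) ^ 2) ∂P
      = ∫⁻ x, ENNReal.ofReal (x ^ 2) ∂(P.map H) := by
    rw [lintegral_map (by fun_prop) hH]
  rw [h1, hlaw, lintegral_withDensity_eq_lintegral_mul _ hfmeas (by fun_prop)]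
  have h2 : ∀ x : ℝ, (fun x => ENNReal.ofReal
        (if 0 < x then x ^ (k - 1) * Real.exp (-x / θ) / (Real.Gamma k * θ ^ k) else 0)) x
        * ENNReal.ofReal (x ^ 2)
      = ENNReal.ofReal (θ ^ 2 * (k * (k + 1))) * gammaPDF (k + 2) (1/θ) x :=
    density_mul_sq k θ hk hθ
  calc ∫⁻ x, ((fun x => ENNReal.ofReal
        (if 0 < x then x ^ (k - 1) * Real.exp (-x / θ) / (Real.Gamma k * θ ^ k) else 0)) *
        fun x => ENNReal.ofReal (x ^ 2)) x
      = ∫⁻ x, ENNReal.ofReal (θ ^ 2 * (k * (k + 1))) * gammaPDF (k + 2) (1/θ) x := by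
        simp only [Pi.mul_apply]
        exact lintegral_congr h2
    _ = ENNReal.ofReal (θ ^ 2 * (k * (k + 1))) * ∫⁻ x, gammaPDF (k + 2) (1/θ) x :=
        lintegral_const_mul _ ((measurable_gammaPDFReal _ _).ennreal_ofReal)
    _ = ENNReal.ofReal (θ ^ 2 * (k * (k + 1))) := by
        rw [lintegral_gammaPDF_eq_one (by linarith) (by positivity), mul_one]

theorem outdoor_ergodic_capacity_bound (k θ ρ lamI lamO : ℝ)
    (hk : 0 < k) (hθ : 0 < θ) (hρ : 0 ≤ ρ) (hI : 0 ≤ lamI) (hO : 0 ≤ lamO)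
    {Ω : Type*} [MeasurableSpace Ω] (P : Measure Ω) [IsProbabilityMeasure P]
    (H : Ω → ℝ) (hH : Measurable H)
    (hlaw : P.map H = volume.withDensity (fun x =>
      ENNReal.ofReal (if 0 < x then x ^ (k - 1) * Real.exp (-x / θ) / (Real.Gamma k * θ ^ k)
        else 0))) :
    ∫ ω, Real.logb 2 (1 + ρ * lamO * (H ω) ^ 2 / (ρ * lamI * (H ω) ^ 2 + 1)) ∂P ≤
      Real.logb 2 (1 + ρ * lamO * (θ ^ 2 * (k * (k + 1))) /
        (ρ * lamI * (θ ^ 2 * (k * (k + 1))) + 1)) := by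
  set a : ℝ := ρ * lamO with ha_def
  set b : ℝ := ρ * lamI with hb_def
  set M : ℝ := θ ^ 2 * (k * (k + 1)) with hM_def
  have ha : 0 ≤ a := mul_nonneg hρ hO
  have hb : 0 ≤ b := mul_nonneg hρ hI
  have hM : 0 ≤ M := by positivity
  set c : ℝ := a / (((a + b) * M + 1) * (b * M + 1) * Real.log 2) with hc_def
  have hlsq := lint_sq k θ hk hθ P H hH hlaw
  have hsm : AEStronglyMeasurable (fun ω => (H ω) ^ 2) P :=
    ((hH.pow_const 2).aestronglyMeasurable)
  have hint2 : Integrable (fun ω => (H ω) ^ 2) P := by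
    refine ⟨hsm, ?_⟩
    rw [HasFiniteIntegral]
    have : ∀ ω, ‖(H ω) ^ 2‖ₑ = ENNReal.ofReal ((H ω) ^ 2) := fun ω =>
      (Real.enorm_eq_ofReal (sq_nonneg _))
    rw [lintegral_congr this, hlsq]
    exact ENNReal.ofReal_lt_top
  have hEH2 : ∫ ω, (H ω) ^ 2 ∂P = M := by
    rw [integral_eq_lintegral_of_nonneg_ae (ae_of_all _ fun ω => sq_nonneg _) hsm, hlsq,
      ENNReal.toReal_ofReal hM]
  have key : ∀ ω, Real.logb 2 (1 + a * (H ω) ^ 2 / (b * (H ω) ^ 2 + 1))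
      ≤ Real.logb 2 (1 + a * M / (b * M + 1)) + c * ((H ω) ^ 2 - M) := fun ω =>
    key_logb a b M ((H ω) ^ 2) ha hb hM (sq_nonneg _)
  have hnn : ∀ ω, 0 ≤ Real.logb 2 (1 + a * (H ω) ^ 2 / (b * (H ω) ^ 2 + 1)) := by
    intro ω
    have h1 : (0:ℝ) < b * (H ω) ^ 2 + 1 := by
      have := mul_nonneg hb (sq_nonneg (H ω)); linarith
    have h2 : 0 ≤ a * (H ω) ^ 2 / (b * (H ω) ^ 2 + 1) :=
      div_nonneg (mul_nonneg ha (sq_nonneg _)) h1.le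
    exact Real.logb_nonneg one_lt_two (by linarith)
  have hsub : Integrable (fun ω => (H ω) ^ 2 - M) P := hint2.sub (integrable_const M)
  have hlin : Integrable (fun ω => c * ((H ω) ^ 2 - M)) P := hsub.const_mul c
  have hbint : Integrable (fun ω => Real.logb 2 (1 + a * M / (b * M + 1))
      + c * ((H ω) ^ 2 - M)) P := (integrable_const _).add hlin
  have hmeas : AEStronglyMeasurable
      (fun ω => Real.logb 2 (1 + a * (H ω) ^ 2 / (b * (H ω) ^ 2 + 1))) P := by
    have hin : Measurable (fun ω => 1 + a * (H ω) ^ 2 / (b * (H ω) ^ 2 + 1)) := by fun_prop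
    exact ((Real.measurable_log.comp hin).div_const (Real.log 2)).aestronglyMeasurable
  have hintg : Integrable
      (fun ω => Real.logb 2 (1 + a * (H ω) ^ 2 / (b * (H ω) ^ 2 + 1))) P := by
    refine hbint.mono' hmeas (ae_of_all _ fun ω => ?_)
    rw [Real.norm_eq_abs, abs_of_nonneg (hnn ω)]
    exact key ω
  calc ∫ ω, Real.logb 2 (1 + a * (H ω) ^ 2 / (b * (H ω) ^ 2 + 1)) ∂P
      ≤ ∫ ω, (Real.logb 2 (1 + a * M / (b * M + 1)) + c * ((H ω) ^ 2 - M)) ∂P :=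
        integral_mono hintg hbint key
    _ = Real.logb 2 (1 + a * M / (b * M + 1)) := by
        rw [integral_add (integrable_const _) hlin, integral_const_mul,
          integral_sub hint2 (integrable_const M), integral_const, integral_const, hEH2]
        simp
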